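/- Let λ ∈ Γ_k with entries ordered λ_1 ≥ λ_2 ≥ ... ≥ λ_n. Then λ_1 σ_{k-1}(λ|1) ≥ (k/n) σ_k(λ). -/

import Mathlib

open Finset

/-- The k-th elementary symmetric polynomial of λ ∈ ℝⁿ. -/
noncomputable def esymm (n k : ℕ) (lam : Fin n → ℝ) : ℝ :=
  ∑ s ∈ Finset.powersetCard k (Finset.univ : Finset (Fin n)), ∏ i ∈ s, lam i

/-- The Garding cone Γ_k. -/
def GammaCone (n k : ℕ) : Set (Fin n → ℝ) :=
  {lam | ∀ j, 1 ≤ j → j ≤ k → 0 < esymm n j lam}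

namespace Garding

open Polynomial

variable {n : ℕ}

lemma esymm_zero (g : Fin n → ℝ) : esymm n 0 g = 1 := by
  simp [esymm]

lemma esymm_update (j : ℕ) (g : Fin n → ℝ) (i : Fin n) :
    esymm n j (Function.update g i 0) =
      ∑ s ∈ powersetCard j (univ.erase i), ∏ x ∈ s, g x := by
  rw [esymm, ← sum_filter_add_sum_filter_not (powersetCard j univ) (fun s => i ∈ s)]
  have h1 : ∑ s ∈ (powersetCard j univ).filter (fun s => i ∈ s),
      ∏ x ∈ s, Function.update g i 0 x = 0 := by
    apply sum_eq_zero
    intro s hs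
    simp only [mem_filter] at hs
    exact prod_eq_zero hs.2 (by simp)
  rw [h1, zero_add]
  have h2 : (powersetCard j univ).filter (fun s => i ∉ s) = powersetCard j (univ.erase i) := by
    ext s
    simp only [mem_filter, mem_powersetCard, subset_erase]
    tauto
  rw [h2]
  apply sum_congr rfl
  intro s hs
  apply prod_congr rfl
  intro x hx
  have hxi : x ≠ i := by
    rw [mem_powersetCard] at hs
    intro h; subst h
    exact (notMem_erase x univ) (hs.1 hx)
  simp [Function.update_of_ne hxi]

lemma sum_mem_part (j : ℕ) (hj : 1 ≤ j) (g : Fin n → ℝ) (i : Fin n) :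
    ∑ s ∈ (powersetCard j univ).filter (fun s => i ∈ s), ∏ x ∈ s, g x
      = g i * ∑ s ∈ powersetCard (j - 1) (univ.erase i), ∏ x ∈ s, g x := by
  rw [mul_sum]
  apply sum_nbij' (fun s => s.erase i) (fun t => insert i t)
  · intro s hs
    simp only [mem_filter, mem_powersetCard] at hs ⊢
    refine ⟨erase_subset_erase i hs.1.1, ?_⟩
    rw [card_erase_of_mem hs.2, hs.1.2]
  · intro t ht
    simp only [mem_filter, mem_powersetCard, subset_erase] at ht ⊢
    refine ⟨⟨subset_univ _, ?_⟩, mem_insert_self i t⟩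
    rw [card_insert_of_notMem ht.1.2, ht.2]
    omega
  · intro s hs
    simp only [mem_filter] at hs
    exact insert_erase hs.2
  · intro t ht
    simp only [mem_powersetCard, subset_erase] at ht
    exact erase_insert ht.1.2
  · intro s hs
    simp only [mem_filter] at hs
    exact (mul_prod_erase s g hs.2).symm

lemma esymm_split (j : ℕ) (hj : 1 ≤ j) (g : Fin n → ℝ) (i : Fin n) :
    esymm n j g = g i * esymm n (j - 1) (Function.update g i 0)
      + esymm n j (Function.update g i 0) := by
  rw [esymm_update, esymm_update, ← sum_mem_part j hj g i]
  rw [esymm, ← sum_filter_add_sum_filter_not (powersetCard j univ) (fun s => i ∈ s)]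
  congr 1
  have h2 : (powersetCard j univ).filter (fun s => i ∉ s) = powersetCard j (univ.erase i) := by
    ext s
    simp only [mem_filter, mem_powersetCard, subset_erase]
    tauto
  rw [h2]

lemma sum_esymm_update (j : ℕ) (g : Fin n → ℝ) :
    ∑ i, esymm n j (Function.update g i 0) = ((n - j : ℕ) : ℝ) * esymm n j g := by
  have : ∀ i : Fin n, esymm n j (Function.update g i 0)
      = ∑ s ∈ powersetCard j univ, if i ∈ s then 0 else ∏ x ∈ s, g x := by
    intro i
    rw [esymm_update]
    rw [sum_ite, sum_const_zero, zero_add]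
    congr 1
    ext s
    simp only [mem_filter, mem_powersetCard, subset_erase]
    tauto
  simp_rw [this]
  rw [sum_comm]
  rw [esymm, mul_sum]
  apply sum_congr rfl
  intro s hs
  rw [sum_ite, sum_const_zero, zero_add, sum_const]
  have : (univ.filter (fun i => i ∉ s)) = sᶜ := by
    ext x; simp
  rw [this, card_compl, nsmul_eq_mul]
  rw [mem_powersetCard] at hs
  rw [hs.2, Fintype.card_fin]

lemma sum_mul_esymm_update (k : ℕ) (hk : 1 ≤ k) (g : Fin n → ℝ) :
    ∑ i, g i * esymm n (k - 1) (Function.update g i 0) = (k : ℝ) * esymm n k g := by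
  have : ∀ i : Fin n, g i * esymm n (k - 1) (Function.update g i 0)
      = ∑ s ∈ powersetCard k univ, if i ∈ s then ∏ x ∈ s, g x else 0 := by
    intro i
    rw [esymm_update, ← sum_mem_part k hk g i, sum_ite, sum_const_zero, add_zero]
  simp_rw [this]
  rw [sum_comm]
  rw [esymm, mul_sum]
  apply sum_congr rfl
  intro s hs
  rw [sum_ite, sum_const_zero, add_zero, sum_const]
  have : (univ.filter (fun i => i ∈ s)) = s := by
    ext x; simp
  rw [this, nsmul_eq_mul]
  rw [mem_powersetCard] at hs
  rw [hs.2]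


lemma card_filter_superset (A u : Finset (Fin n)) (j : ℕ) (hu : u ⊆ A) (hm : u.card ≤ j) :
    ((powersetCard j A).filter (fun s => u ⊆ s)).card = (A.card - u.card).choose (j - u.card) := by
  have key : ((powersetCard j A).filter (fun s => u ⊆ s)).card
      = (powersetCard (j - u.card) (A \ u)).card := by
    apply card_nbij' (fun s => s \ u) (fun v => v ∪ u)
    · intro s hs
      simp only [mem_coe, mem_filter, mem_powersetCard] at hs ⊢
      exact ⟨sdiff_subset_sdiff hs.1.1 Subset.rfl, by rw [card_sdiff_of_subset hs.2, hs.1.2]⟩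
    · intro v hv
      simp only [mem_coe, mem_filter, mem_powersetCard] at hv ⊢
      have hdisj : Disjoint v u := disjoint_of_subset_left hv.1 sdiff_disjoint
      refine ⟨⟨union_subset (hv.1.trans (sdiff_subset)) hu, ?_⟩, subset_union_right⟩
      rw [card_union_of_disjoint hdisj, hv.2, Nat.sub_add_cancel hm]
    · intro s hs
      simp only [mem_coe, mem_filter, mem_powersetCard] at hs
      exact sdiff_union_of_subset hs.2
    · intro v hv
      simp only [mem_coe, mem_powersetCard] at hv
      have hdisj : Disjoint v u := disjoint_of_subset_left hv.1 sdiff_disjoint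
      show (v ∪ u) \ u = v
      rw [union_sdiff_distrib, sdiff_self, union_comm]
      rw [bot_eq_empty, empty_union, sdiff_eq_self_of_disjoint hdisj]
  rw [key, card_powersetCard, card_sdiff_of_subset hu]

lemma sum_powersetCard_add (A : Finset (Fin n)) (j : ℕ) (hj : j ≤ A.card) (g : Fin n → ℝ) (t : ℝ) :
    ∑ s ∈ powersetCard j A, ∏ x ∈ s, (g x + t)
      = ∑ m ∈ range (j + 1), ((A.card - m).choose (j - m) : ℝ) * t ^ (j - m)
          * ∑ s ∈ powersetCard m A, ∏ x ∈ s, g x := by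
  have step1 : ∑ s ∈ powersetCard j A, ∏ x ∈ s, (g x + t)
      = ∑ s ∈ powersetCard j A, ∑ u ∈ A.powerset,
          if u ⊆ s then (∏ x ∈ u, g x) * t ^ (j - u.card) else 0 := by
    apply sum_congr rfl
    intro s hs
    rw [mem_powersetCard] at hs
    rw [prod_add]
    have hpow : s.powerset = A.powerset.filter (fun u => u ⊆ s) := by
      ext u
      simp only [mem_powerset, mem_filter]
      exact ⟨fun h => ⟨h.trans hs.1, h⟩, fun h => h.2⟩
    rw [hpow, sum_filter]
    apply sum_congr rfl
    intro u _
    by_cases hus : u ⊆ s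
    · simp only [hus, if_true]
      rw [prod_const, card_sdiff_of_subset hus, hs.2]
    · simp [hus]
  rw [step1, sum_comm]
  have step2 : ∀ u ∈ A.powerset,
      (∑ s ∈ powersetCard j A, if u ⊆ s then (∏ x ∈ u, g x) * t ^ (j - u.card) else 0)
      = (((powersetCard j A).filter (fun s => u ⊆ s)).card : ℝ)
          * ((∏ x ∈ u, g x) * t ^ (j - u.card)) := by
    intro u _
    rw [sum_ite, sum_const_zero, add_zero, sum_const, nsmul_eq_mul]
  rw [sum_congr rfl step2]
  rw [powerset_card_disjiUnion]
  erw [sum_disjiUnion]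
  have hvanish : ∀ m ∈ range (A.card + 1), m ∉ range (j + 1) →
      (∑ u ∈ powersetCard m A, (((powersetCard j A).filter (fun s => u ⊆ s)).card : ℝ)
        * ((∏ x ∈ u, g x) * t ^ (j - u.card))) = 0 := by
    intro m hm hmn
    rw [mem_range] at hm hmn
    apply sum_eq_zero
    intro u hu
    rw [mem_powersetCard] at hu
    have hemp : (powersetCard j A).filter (fun s => u ⊆ s) = ∅ := by
      rw [filter_eq_empty_iff]
      intro s hs
      rw [mem_powersetCard] at hs
      intro hus
      have := card_le_card hus
      omega
    rw [hemp]
    simp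
  rw [← sum_subset (range_subset_range.mpr (by omega : j + 1 ≤ A.card + 1)) hvanish]
  apply sum_congr rfl
  intro m hm
  rw [mem_range] at hm
  rw [mul_sum]
  apply sum_congr rfl
  intro u hu
  rw [mem_powersetCard] at hu
  rw [card_filter_superset A u j hu.1 (by omega), hu.2]
  ring

/-- iterated derivative of a real-rooted polynomial is real-rooted -/
lemma iter_deriv_real_rooted (p : ℝ[X]) (hcard : Multiset.card p.roots = p.natDegree)
    (m : ℕ) (hm : m ≤ p.natDegree) :
    Multiset.card (derivative^[m] p).roots = p.natDegree - m ∧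
      (derivative^[m] p).natDegree = p.natDegree - m := by
  have low : ∀ j : ℕ, p.natDegree - j ≤ Multiset.card (derivative^[j] p).roots := by
    intro j
    induction j with
    | zero => simp [hcard]
    | succ j ih =>
      have h1 := Polynomial.card_roots_le_derivative (derivative^[j] p)
      rw [Function.iterate_succ_apply']
      omega
  have up : (derivative^[m] p).natDegree ≤ p.natDegree - m :=
    Polynomial.natDegree_iterate_derivative p m
  have mid : Multiset.card (derivative^[m] p).roots ≤ (derivative^[m] p).natDegree :=
    Polynomial.card_roots' _
  have := low m
  omega

lemma reverse_multiset_prod (M : Multiset ℝ[X]) :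
    M.prod.reverse = (M.map Polynomial.reverse).prod := by
  induction M using Multiset.induction with
  | empty => simp [Polynomial.reverse]
  | cons a M ih =>
    rw [Multiset.prod_cons, Multiset.map_cons, Multiset.prod_cons,
      Polynomial.reverse_mul_of_domain, ih]

lemma reverse_X_sub_C (r : ℝ) : (X - C r).reverse = 1 - C r * X := by
  ext m
  rw [coeff_reverse, natDegree_X_sub_C]
  match m with
  | 0 => simp [revAt_le]
  | 1 => simp [revAt_le, coeff_one]
  | (m + 2) =>
    rw [Polynomial.revAt_eq_self_of_lt (by omega)]
    simp [coeff_sub, coeff_X, coeff_C, coeff_one, coeff_C_mul,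
      show ¬(1 = m + 2) by omega, show ¬(m + 2 = 0) by omega]

lemma newton_contra (g : Fin n → ℝ) (k : ℕ) (hk2 : 2 ≤ k) (hkn : k ≤ n)
    (e1 : esymm n (k-1) g = 0) (e2 : 0 < esymm n (k-2) g) (e0 : 0 < esymm n k g) :
    False := by
  classical
  set P : Polynomial ℝ := ∏ i ∈ (univ : Finset (Fin n)), (X + C (g i)) with hP
  have hPmonic : P.Monic := monic_prod_of_monic _ _ (fun i _ => monic_X_add_C (g i))
  have hPne : P ≠ 0 := hPmonic.ne_zero
  have hPdeg : P.natDegree = n := by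
    rw [hP, natDegree_prod_of_monic _ _ (fun i _ => monic_X_add_C (g i))]
    simp [natDegree_X_add_C]
  have hProots : Multiset.card P.roots = n := by
    rw [hP, roots_prod _ _ (hP ▸ hPne), Multiset.card_bind]
    have h1 : ∀ i : Fin n, Multiset.card ((X + C (g i)).roots) = 1 := by
      intro i
      rw [show (X : Polynomial ℝ) + C (g i) = X - C (-(g i)) by rw [map_neg, sub_neg_eq_add]]
      rw [roots_X_sub_C]
      rfl
    have h2 : (Multiset.map (Multiset.card ∘ fun i => (X + C (g i)).roots) univ.val).sum
        = (Multiset.map (fun _ : Fin n => (1:ℕ)) univ.val).sum := by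
      congr 1
      exact Multiset.map_congr rfl (fun i _ => h1 i)
    rw [h2]
    simp
  have hPcoeff : ∀ j : ℕ, j ≤ n → P.coeff (n - j) = esymm n j g := by
    intro j hj
    have hcu : (univ : Finset (Fin n)).card = n := by simp
    have h := Finset.prod_X_add_C_coeff (univ : Finset (Fin n)) g
      (k := n - j) (by rw [hcu]; omega)
    rw [hP, h, hcu, show n - (n - j) = j by omega]
    rfl
  -- R = (n-k)-th derivative of P
  obtain ⟨hRroots, hRdeg⟩ := iter_deriv_real_rooted P (hPdeg ▸ hProots) (n - k)
    (by omega)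
  set R : Polynomial ℝ := derivative^[n - k] P with hR
  rw [hPdeg, show n - (n - k) = k by omega] at hRroots hRdeg
  have hRcoeff : ∀ m : ℕ, R.coeff m
      = ((m + (n-k)).descFactorial (n-k) : ℝ) * P.coeff (m + (n-k)) := by
    intro m
    rw [hR, Polynomial.coeff_iterate_derivative, nsmul_eq_mul]
  have hR0 : 0 < R.coeff 0 := by
    rw [hRcoeff, show 0 + (n - k) = n - k from by omega, hPcoeff k hkn]
    apply mul_pos _ e0
    have : (n-k).descFactorial (n-k) ≠ 0 := by
      rw [Ne, Nat.descFactorial_eq_zero_iff_lt]; omega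
    exact_mod_cast Nat.pos_of_ne_zero this
  have hR1 : R.coeff 1 = 0 := by
    rw [hRcoeff, show 1 + (n - k) = n - (k-1) from by omega, hPcoeff (k-1) (by omega), e1,
      mul_zero]
  have hR2 : 0 < R.coeff 2 := by
    rw [hRcoeff, show 2 + (n - k) = n - (k-2) from by omega, hPcoeff (k-2) (by omega)]
    apply mul_pos _ e2
    have : (n-(k-2)).descFactorial (n-k) ≠ 0 := by
      rw [Ne, Nat.descFactorial_eq_zero_iff_lt]; omega
    exact_mod_cast Nat.pos_of_ne_zero this
  have hRne : R ≠ 0 := by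
    intro h
    rw [h] at hR0
    simp at hR0
  have hRsplits : Splits R := splits_iff_card_roots.mpr (by rw [hRroots, hRdeg])
  have hRfact := hRsplits.eq_prod_roots
  have h0notroot : ∀ a ∈ R.roots, a ≠ 0 := by
    intro a ha h0
    subst h0
    have := isRoot_of_mem_roots ha
    rw [IsRoot, ← coeff_zero_eq_eval_zero] at this
    rw [this] at hR0
    simp at hR0
  have hlcne : R.leadingCoeff ≠ 0 := leadingCoeff_ne_zero.mpr hRne
  set Q : Polynomial ℝ := R.reverse with hQ
  have hQeq : Q = C R.leadingCoeff * (R.roots.map (fun a => 1 - C a * X)).prod := by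
    rw [hQ]
    conv_lhs => rw [hRfact]
    rw [reverse_mul_of_domain, reverse_multiset_prod, Multiset.map_map]
    rw [Polynomial.reverse_C]
    congr 1
    have h3 : Multiset.map (Polynomial.reverse ∘ fun a => X - C a) R.roots
        = Multiset.map (fun a => 1 - C a * X) R.roots :=
      Multiset.map_congr rfl (fun a _ => reverse_X_sub_C a)
    rw [h3]
  have hfacne : ∀ a ∈ R.roots, (1 : Polynomial ℝ) - C a * X ≠ 0 := by
    intro a _ h
    have : ((1 : Polynomial ℝ) - C a * X).coeff 0 = 0 := by rw [h]; simp
    simp [coeff_one, coeff_C_mul] at this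
  have hQcard : Multiset.card Q.roots = k := by
    rw [hQeq, roots_C_mul _ hlcne, roots_multiset_prod, Multiset.card_bind]
    · have h1 : ∀ a ∈ R.roots, Multiset.card (((1 : Polynomial ℝ) - C a * X).roots) = 1 := by
        intro a ha
        have hane : a ≠ 0 := h0notroot a ha
        have hfac : (1 : Polynomial ℝ) - C a * X = C (-a) * (X - C a⁻¹) := by
          rw [C_neg, neg_mul, mul_sub, ← C_mul, mul_inv_cancel₀ hane, C_1]
          ring
        rw [hfac, roots_C_mul _ (neg_ne_zero.mpr hane), roots_X_sub_C]
        rfl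
      rw [Multiset.map_map]
      have h2 : (Multiset.map ((Multiset.card ∘ Polynomial.roots) ∘ fun a => 1 - C a * X) R.roots).sum
          = (Multiset.map (fun _ : ℝ => (1:ℕ)) R.roots).sum := by
        congr 1
        exact Multiset.map_congr rfl (fun a ha => h1 a ha)
      rw [h2]
      simp [hRroots]
    · intro h
      rw [Multiset.mem_map] at h
      obtain ⟨a, ha, h⟩ := h
      exact hfacne a ha h
  have hQdegle : Q.natDegree ≤ k := hRdeg ▸ reverse_natDegree_le R
  have hQdeg : Q.natDegree = k := le_antisymm hQdegle (by
    have := Polynomial.card_roots' Q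
    omega)
  have hQc2 : Q.coeff (k-2) = R.coeff 2 := by
    rw [hQ, coeff_reverse, hRdeg, revAt_le (by omega), show k - (k-2) = 2 from by omega]
  have hQc1 : Q.coeff (k-1) = 0 := by
    rw [hQ, coeff_reverse, hRdeg, revAt_le (by omega), show k - (k-1) = 1 from by omega, hR1]
  have hQck : Q.coeff k = R.coeff 0 := by
    rw [hQ, coeff_reverse, hRdeg, revAt_le (by omega), show k - k = 0 from by omega]
  -- T = (k-2)-th derivative of Q
  obtain ⟨hTroots, hTdeg⟩ := iter_deriv_real_rooted Q (hQdeg ▸ hQcard) (k - 2) (by omega)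
  set T : Polynomial ℝ := derivative^[k - 2] Q with hT
  rw [hQdeg, show k - (k - 2) = 2 from by omega] at hTroots hTdeg
  have hTcoeff : ∀ m : ℕ, T.coeff m
      = ((m + (k-2)).descFactorial (k-2) : ℝ) * Q.coeff (m + (k-2)) := by
    intro m
    rw [hT, Polynomial.coeff_iterate_derivative, nsmul_eq_mul]
  have hT0 : 0 < T.coeff 0 := by
    rw [hTcoeff, show 0 + (k-2) = k - 2 from by omega, hQc2]
    apply mul_pos _ hR2
    have : (k-2).descFactorial (k-2) ≠ 0 := by
      rw [Ne, Nat.descFactorial_eq_zero_iff_lt]; omega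
    exact_mod_cast Nat.pos_of_ne_zero this
  have hT1 : T.coeff 1 = 0 := by
    rw [hTcoeff, show 1 + (k-2) = k - 1 from by omega, hQc1, mul_zero]
  have hT2 : 0 < T.coeff 2 := by
    rw [hTcoeff, show 2 + (k-2) = k from by omega, hQck]
    apply mul_pos _ hR0
    have : k.descFactorial (k-2) ≠ 0 := by
      rw [Ne, Nat.descFactorial_eq_zero_iff_lt]; omega
    exact_mod_cast Nat.pos_of_ne_zero this
  -- T is a real-rooted quadratic with middle coefficient zero and outer coefficients positive
  have hTsplits : Splits T := splits_iff_card_roots.mpr (by rw [hTroots, hTdeg])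
  have hTfact := hTsplits.eq_prod_roots
  obtain ⟨u, v, huv⟩ := Multiset.card_eq_two.mp hTroots
  rw [huv] at hTfact
  set a : ℝ := T.leadingCoeff with ha
  have hexp : T = C a * (X^2 - C (u+v) * X + C (u*v)) := by
    rw [hTfact]
    congr 1
    rw [show ({u, v} : Multiset ℝ) = u ::ₘ {v} from rfl, Multiset.map_cons,
      Multiset.map_singleton, Multiset.prod_cons, Multiset.prod_singleton, C_add, C_mul]
    ring
  have hc0 : T.coeff 0 = a * (u * v) := by
    rw [hexp]
    simp [coeff_C_mul, coeff_sub, coeff_add, coeff_X_pow, coeff_C, coeff_X, mul_comm]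
  have hc1 : T.coeff 1 = a * (-(u+v)) := by
    rw [hexp]
    simp [coeff_C_mul, coeff_sub, coeff_add, coeff_X_pow, coeff_C, coeff_X, mul_comm]
  have hc2 : T.coeff 2 = a := by
    rw [hexp]
    simp [coeff_C_mul, coeff_sub, coeff_add, coeff_X_pow, coeff_C, coeff_X, mul_comm]
  rw [hc0] at hT0
  rw [hc1] at hT1
  rw [hc2] at hT2
  have hsum : u + v = 0 := by
    rcases mul_eq_zero.mp hT1 with h | h
    · exact absurd h (ne_of_gt hT2)
    · linarith
  have hv : v = -u := by linarith
  rw [hv] at hT0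
  nlinarith [sq_nonneg u, hT2, hT0]


end Garding

namespace Garding
variable {n : ℕ}

lemma esymm_one' (g : Fin n → ℝ) : esymm n 1 g = ∑ i, g i := by
  rw [esymm]
  rw [powersetCard_one]
  rw [sum_map]
  simp

/-- Main lemma: on Γ_k, σ_{k-1}(λ|i) > 0. -/
lemma esymm_update_pos : ∀ k : ℕ, 1 ≤ k → k ≤ n →
    ∀ g : Fin n → ℝ, (∀ j, 1 ≤ j → j ≤ k → 0 < esymm n j g) →
    ∀ i : Fin n, 0 < esymm n (k - 1) (Function.update g i 0) := by
  intro k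
  induction k using Nat.strong_induction_on with
  | _ k IH =>
    intro hk1 hkn g hg i
    rcases Nat.lt_or_ge k 2 with hk2 | hk2
    · have hk : k = 1 := by omega
      subst hk
      rw [show 1 - 1 = 0 from rfl, esymm_zero]
      norm_num
    · -- k ≥ 2 : by contradiction
      by_contra hneg
      push_neg at hneg
      have hncard : (univ.erase i).card = n - 1 := by
        rw [card_erase_of_mem (mem_univ i), card_univ, Fintype.card_fin]
      have hkn' : k - 1 ≤ (univ.erase i).card := by omega
      set f : ℝ → ℝ :=
        fun t => ∑ s ∈ powersetCard (k-1) (univ.erase i), ∏ x ∈ s, (g x + t) with hf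
      have hem : ∀ m : ℕ, 1 ≤ m → m ≤ k - 2 →
          0 < ∑ s ∈ powersetCard m (univ.erase i), ∏ x ∈ s, g x := by
        intro m hm1 hm2
        rw [← esymm_update]
        have := IH (m+1) (by omega) (by omega) (by omega) g
          (fun j hj1 hj2 => hg j hj1 (by omega)) i
        simpa using this
      have hem0 : ∑ s ∈ powersetCard 0 (univ.erase i), ∏ x ∈ s, g x = 1 := by simp
      have hf0eq : f 0 = ∑ s ∈ powersetCard (k-1) (univ.erase i), ∏ x ∈ s, g x := by
        rw [hf]; simp
      have hf0 : f 0 ≤ 0 := by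
        rw [hf0eq, ← esymm_update]; exact hneg
      -- a value where f is at least 1
      have hC : 0 < ((n - 1 - 0).choose (k - 1 - 0) : ℝ) := by
        have : k - 1 - 0 ≤ n - 1 - 0 := by omega
        exact_mod_cast Nat.choose_pos this
      set c : ℝ := ((n - 1 - 0).choose (k - 1 - 0) : ℝ) with hc
      set T : ℝ := max 1 ((1 - f 0) / c) with hT
      have hT1 : (1:ℝ) ≤ T := le_max_left _ _
      have hT0 : (0:ℝ) ≤ T := by linarith
      have hterm : ∀ m : ℕ, m ∈ range (k - 1 + 1) → m ∉ ({0, k-1} : Finset ℕ) →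
          (0:ℝ) ≤ (((univ.erase i).card - m).choose (k - 1 - m) : ℝ) * T ^ (k - 1 - m)
            * ∑ s ∈ powersetCard m (univ.erase i), ∏ x ∈ s, g x := by
        intro m hm1 hm2
        simp only [mem_range] at hm1
        simp only [mem_insert, mem_singleton] at hm2
        push_neg at hm2
        apply mul_nonneg (mul_nonneg (by positivity) (by positivity))
        exact le_of_lt (hem m (by omega) (by omega))
      have hfT : 1 ≤ f T := by
        have hexp := sum_powersetCard_add (univ.erase i) (k-1) hkn' g T
        rw [hf]
        simp only []
        rw [hexp]
        have hsub : ({0, k-1} : Finset ℕ) ⊆ range (k - 1 + 1) := by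
          intro m hm
          simp only [mem_insert, mem_singleton] at hm
          rcases hm with h | h <;> (subst h; simp only [mem_range]; omega)
        have hpair := Finset.sum_le_sum_of_subset_of_nonneg hsub
          (fun m hm1 hm2 => hterm m hm1 hm2)
        have hpairval : ∑ m ∈ ({0, k-1} : Finset ℕ),
            (((univ.erase i).card - m).choose (k - 1 - m) : ℝ) * T ^ (k - 1 - m)
              * ∑ s ∈ powersetCard m (univ.erase i), ∏ x ∈ s, g x
            = c * T ^ (k-1) + f 0 := by
          rw [Finset.sum_pair (by omega : (0:ℕ) ≠ k - 1)]
          rw [hem0, hncard]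
          rw [hf0eq]
          have h1 : k - 1 - (k-1) = 0 := by omega
          rw [h1]
          simp [hc]
        have hcT : 1 - f 0 ≤ c * T ^ (k-1) := by
          have h2 : (1 - f 0) / c ≤ T := le_max_right _ _
          have h3 : 1 - f 0 ≤ c * T := by
            rw [div_le_iff₀ hC] at h2
            linarith [mul_comm T c]
          have h4 : T ≤ T ^ (k-1) := le_self_pow₀ hT1 (by omega)
          nlinarith
        linarith [hpair.trans_eq' hpairval]
      -- IVT
      have hcont : Continuous f := by
        rw [hf]
        apply continuous_finset_sum
        intro s _
        apply continuous_finset_prod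
        intro x _
        exact continuous_const.add continuous_id
      have hiv : (0:ℝ) ∈ Set.Icc (f 0) (f T) := ⟨hf0, by linarith⟩
      obtain ⟨t₀, ht₀mem, ht₀⟩ := intermediate_value_Icc hT0 hcont.continuousOn hiv
      have ht₀0 : 0 ≤ t₀ := ht₀mem.1
      set g' : Fin n → ℝ := fun x => g x + t₀ with hg'def
      have hesymm_g' : ∀ j : ℕ, esymm n j g'
          = ∑ s ∈ powersetCard j (univ : Finset (Fin n)), ∏ x ∈ s, (g x + t₀) := by
        intro j; rfl
      have hg' : ∀ j, 1 ≤ j → j ≤ k → 0 < esymm n j g' := by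
        intro j hj1 hj2
        rw [hesymm_g', sum_powersetCard_add _ j (by simp; omega) g t₀]
        apply Finset.sum_pos'
        · intro m hm
          simp only [mem_range] at hm
          apply mul_nonneg (mul_nonneg (by positivity) (by positivity))
          rcases Nat.eq_zero_or_pos m with h | h
          · subst h; simp
          · exact le_of_lt (hg m h (by omega))
        · refine ⟨j, by simp, ?_⟩
          have h1 : j - j = 0 := by omega
          rw [h1]
          have h2 : 0 < esymm n j g := hg j hj1 hj2
          simp only [pow_zero, Nat.choose_zero_right, Nat.cast_one, one_mul, mul_one]
          exact h2
      have he1 : esymm n (k-1) (Function.update g' i 0) = 0 := by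
        rw [esymm_update]
        exact ht₀
      have he2 : 0 < esymm n (k-2) (Function.update g' i 0) := by
        have := IH (k-1) (by omega) (by omega) (by omega) g'
          (fun j hj1 hj2 => hg' j hj1 (by omega)) i
        rw [show k - 1 - 1 = k - 2 from by omega] at this
        exact this
      have he0 : 0 < esymm n k (Function.update g' i 0) := by
        have hsplit := esymm_split k (by omega) g' i
        rw [he1, mul_zero, zero_add] at hsplit
        rw [← hsplit]
        exact hg' k hk1 le_rfl
      exact newton_contra (Function.update g' i 0) k hk2 hkn he1 he2 he0


end Garding

open Garding in
/-- For λ ∈ Γ_k ordered decreasingly, λ_1 σ_{k-1}(λ|1) ≥ (k/n) σ_k(λ). -/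
theorem largest_entry_bound (n k : ℕ) (hn : 1 ≤ n) (hk1 : 1 ≤ k) (hkn : k ≤ n)
    (lam : Fin n → ℝ) (hlam : lam ∈ GammaCone n k) (hsort : Antitone lam) :
    (k : ℝ) / (n : ℝ) * esymm n k lam ≤
      lam ⟨0, by omega⟩ *
        esymm n (k - 1) (Function.update lam ⟨0, by omega⟩ 0) := by
  have hglam : ∀ j, 1 ≤ j → j ≤ k → 0 < esymm n j lam := hlam
  set i0 : Fin n := ⟨0, by omega⟩ with hi0
  set μ : Fin n → ℝ := Function.update lam i0 0 with hμ
  have hmax : ∀ i : Fin n, lam i ≤ lam i0 := by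
    intro i
    exact hsort (by simp [hi0, Fin.le_def])
  have hnR : (0:ℝ) < n := by exact_mod_cast hn
  have hlam0 : 0 < lam i0 := by
    by_contra h
    push_neg at h
    have h1 : esymm n 1 lam ≤ 0 := by
      rw [esymm_one']
      apply Finset.sum_nonpos
      intro i _
      linarith [hmax i]
    linarith [hglam 1 le_rfl hk1]
  have hA : 0 < esymm n (k-1) μ := esymm_update_pos k hk1 hkn lam hglam i0
  have hsplit := esymm_split k hk1 lam i0
  rcases le_or_gt (esymm n k μ) 0 with hμk | hμk
  · -- σ_k(λ|0) ≤ 0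
    have h1 : esymm n k lam ≤ lam i0 * esymm n (k-1) μ := by
      rw [hsplit]; linarith
    have h2 : (k:ℝ)/n ≤ 1 := by
      rw [div_le_one hnR]; exact_mod_cast hkn
    have h3 : 0 < esymm n k lam := hglam k hk1 le_rfl
    nlinarith
  · -- σ_k(λ|0) > 0 : μ ∈ Γ_k
    have hμΓ : ∀ j, 1 ≤ j → j ≤ k → 0 < esymm n j μ := by
      intro j hj1 hj2
      rcases Nat.lt_or_ge j k with h | h
      · have := esymm_update_pos (j+1) (by omega) (by omega) lam
          (fun m hm1 hm2 => hglam m hm1 (by omega)) i0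
        rw [show j + 1 - 1 = j from by omega] at this
        exact this
      · have : j = k := by omega
        subst this
        exact hμk
    have hB : ∀ i : Fin n, 0 < esymm n (k-1) (Function.update μ i 0) :=
      esymm_update_pos k hk1 hkn μ hμΓ
    have hμi0 : μ i0 = 0 := by rw [hμ]; simp
    have hupd : Function.update μ i0 0 = μ := by
      rw [hμ, Function.update_idem]
    have hI3 := sum_mul_esymm_update k hk1 μ
    have hI2 := sum_esymm_update (k-1) μ
    -- drop the i0 term
    have hsum1 : ∑ i ∈ univ.erase i0, μ i * esymm n (k-1) (Function.update μ i 0)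
        = (k:ℝ) * esymm n k μ := by
      rw [← hI3]
      rw [← Finset.sum_erase_add univ _ (mem_univ i0)]
      rw [hμi0, zero_mul, add_zero]
    have hsum2 : ∑ i ∈ univ.erase i0, esymm n (k-1) (Function.update μ i 0)
        = ((n - (k-1) : ℕ) : ℝ) * esymm n (k-1) μ - esymm n (k-1) μ := by
      rw [← hI2, ← Finset.sum_erase_add univ _ (mem_univ i0), hupd]
      ring
    have hμle : ∀ i ∈ univ.erase i0, μ i * esymm n (k-1) (Function.update μ i 0)
        ≤ lam i0 * esymm n (k-1) (Function.update μ i 0) := by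
      intro i hi
      have hne : i ≠ i0 := (mem_erase.mp hi).1
      have : μ i = lam i := by rw [hμ]; exact Function.update_of_ne hne 0 lam
      rw [this]
      exact mul_le_mul_of_nonneg_right (hmax i) (le_of_lt (hB i))
    have hbound : (k:ℝ) * esymm n k μ
        ≤ lam i0 * (((n - (k-1) : ℕ) : ℝ) * esymm n (k-1) μ - esymm n (k-1) μ) := by
      rw [← hsum1, ← hsum2, mul_sum]
      exact Finset.sum_le_sum hμle
    have hcast : ((n - (k-1) : ℕ) : ℝ) = (n:ℝ) - (k:ℝ) + 1 := by
      have h1 : (n - (k-1) : ℕ) = n - k + 1 := by omega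
      rw [h1]
      push_cast [Nat.cast_sub hkn]
      ring
    rw [hcast] at hbound
    -- k σ_k(μ) ≤ λ0 (n-k) σ_{k-1}(μ)
    have hkR : (0:ℝ) < k := by exact_mod_cast hk1
    -- final: k σ_k(lam) ≤ n λ0 A
    have hkey : (k:ℝ) * esymm n k lam ≤ (n:ℝ) * (lam i0 * esymm n (k-1) μ) := by
      have := hsplit
      nlinarith [hbound, hlam0, hA]
    rw [div_mul_eq_mul_div, div_le_iff₀ hnR]
    calc (k:ℝ) * esymm n k lam ≤ (n:ℝ) * (lam i0 * esymm n (k-1) μ) := hkey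
      _ = lam i0 * esymm n (k-1) μ * n := by ring
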